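/- arXiv:2309.14618 — 2 statements merged into one kernel-verified Lean document; each statement's English description precedes it below -/
import Mathlib

section
/- Let n ≥ 1 and R be natural numbers, and let ℓ, ℓ′ : ℕ → ℕ be sequences satisfying ℓ_r ≤ n and ℓ′_r ≤ n for all r, and ℓ_r = ℓ′_r = 0 for all r > R, such that ℓ strictly precedes ℓ′ in lexicographic order (there is r* with ℓ_{r*} < ℓ′_{r*} and ℓ_r = ℓ′_r for all 1 ≤ r < r*). Set w = ∑_{r=1}^{R} ℓ_r (2n)^{−r} and w′ = ∑_{r=1}^{R} ℓ′_r (2n)^{−r}. Suppose f, g : ℕ → ℝ are strictly positive functions and C ≥ 0 is a constant such that for all m ≥ 2, |log f(m) + w·log m| ≤ C and |log g(m) + w′·log m| ≤ C. Then g(m)/f(m) → 0 as m → ∞. -/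
/-- Lemma 5.6 of the paper in abstracted form: if the lie sequence `ℓ` of `h`
strictly precedes the lie sequence `ℓ'` of `h'` in lexicographic order, and the
(positive) probabilities `f m = P^m(h)`, `g m = P^m(h')` satisfy
`log (f m) = -w log m + Θ(1)` and `log (g m) = -w' log m + Θ(1)` where
`w = ∑ ℓ_r (2n)^{-r}` and `w' = ∑ ℓ'_r (2n)^{-r}`, then `g m / f m → 0`. -/
theorem ratio_tendsto_zero_of_lex_lt
    (n R : ℕ) (hn : 1 ≤ n) (ℓ ℓ' : ℕ → ℕ)
    (hℓ : ∀ r, ℓ r ≤ n) (hℓ' : ∀ r, ℓ' r ≤ n)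
    (hℓR : ∀ r, R < r → ℓ r = 0) (hℓ'R : ∀ r, R < r → ℓ' r = 0)
    (hlex : ∃ rs, 1 ≤ rs ∧ rs ≤ R ∧ ℓ rs < ℓ' rs ∧
      ∀ r, 1 ≤ r → r < rs → ℓ r = ℓ' r)
    (f g : ℕ → ℝ) (hf : ∀ m, 0 < f m) (hg : ∀ m, 0 < g m)
    (C : ℝ) (hC : 0 ≤ C)
    (hfb : ∀ m : ℕ, 2 ≤ m →
      |Real.log (f m) +
        (∑ r ∈ Finset.Icc 1 R, (ℓ r : ℝ) * (2 * n : ℝ) ^ (-(r : ℤ))) * Real.log m| ≤ C)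
    (hgb : ∀ m : ℕ, 2 ≤ m →
      |Real.log (g m) +
        (∑ r ∈ Finset.Icc 1 R, (ℓ' r : ℝ) * (2 * n : ℝ) ^ (-(r : ℤ))) * Real.log m| ≤ C) :
    Filter.Tendsto (fun m => g m / f m) Filter.atTop (nhds 0) := by
  classical
  obtain ⟨rs, hrs1, hrsR, hlt, heq⟩ := hlex
  have hn' : (1:ℝ) ≤ (n:ℝ) := by exact_mod_cast hn
  have h2n : (0:ℝ) < 2 * n := by linarith
  set x : ℝ := (2 * (n:ℝ))⁻¹ with hxdef
  have hx0 : 0 < x := by positivity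
  have hx1 : x < 1 := by
    rw [hxdef, inv_lt_one_iff₀]; right; linarith
  have hxne1 : x ≠ 1 := ne_of_lt hx1
  have hzpow : ∀ r : ℕ, (2 * (n:ℝ)) ^ (-(r:ℤ)) = x ^ r := by
    intro r
    rw [zpow_neg, zpow_natCast, hxdef, inv_pow]
  set W : ℝ := ∑ r ∈ Finset.Icc 1 R, (ℓ r : ℝ) * x ^ r with hW
  set W' : ℝ := ∑ r ∈ Finset.Icc 1 R, (ℓ' r : ℝ) * x ^ r with hW'
  -- key inequality W < W'
  have hkey : W < W' := by
    have hsub : W' - W = ∑ r ∈ Finset.Ico 1 (R+1), ((ℓ' r : ℝ) - ℓ r) * x ^ r := by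
      rw [hW, hW', ← Finset.sum_sub_distrib, ← Finset.Ico_add_one_right_eq_Icc]
      exact Finset.sum_congr rfl (fun r _ => by ring)
    have hsplit1 : ∑ r ∈ Finset.Ico 1 rs, ((ℓ' r : ℝ) - ℓ r) * x ^ r
        + ∑ r ∈ Finset.Ico rs (R+1), ((ℓ' r : ℝ) - ℓ r) * x ^ r
        = ∑ r ∈ Finset.Ico 1 (R+1), ((ℓ' r : ℝ) - ℓ r) * x ^ r :=
      Finset.sum_Ico_consecutive _ hrs1 (by omega)
    have hzero : ∑ r ∈ Finset.Ico 1 rs, ((ℓ' r : ℝ) - ℓ r) * x ^ r = 0 := by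
      apply Finset.sum_eq_zero
      intro r hr
      rw [Finset.mem_Ico] at hr
      rw [heq r hr.1 hr.2]; ring
    have hsplit2 : ∑ r ∈ Finset.Ico rs (rs+1), ((ℓ' r : ℝ) - ℓ r) * x ^ r
        + ∑ r ∈ Finset.Ico (rs+1) (R+1), ((ℓ' r : ℝ) - ℓ r) * x ^ r
        = ∑ r ∈ Finset.Ico rs (R+1), ((ℓ' r : ℝ) - ℓ r) * x ^ r :=
      Finset.sum_Ico_consecutive _ (by omega) (by omega)
    have hsingle : ∑ r ∈ Finset.Ico rs (rs+1), ((ℓ' r : ℝ) - ℓ r) * x ^ r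
        = ((ℓ' rs : ℝ) - ℓ rs) * x ^ rs := by
      rw [Finset.sum_Ico_succ_top (le_refl rs), Finset.Ico_self, Finset.sum_empty, zero_add]
    have hhead : x ^ rs ≤ ((ℓ' rs : ℝ) - ℓ rs) * x ^ rs := by
      have : (1:ℝ) ≤ (ℓ' rs : ℝ) - ℓ rs := by
        have : (ℓ rs : ℝ) + 1 ≤ (ℓ' rs : ℝ) := by exact_mod_cast hlt
        linarith
      nlinarith [pow_pos hx0 rs]
    have htail : -(x ^ rs) < ∑ r ∈ Finset.Ico (rs+1) (R+1), ((ℓ' r : ℝ) - ℓ r) * x ^ r := by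
      have hb : ∀ r ∈ Finset.Ico (rs+1) (R+1),
          -((n:ℝ) * x ^ r) ≤ ((ℓ' r : ℝ) - ℓ r) * x ^ r := by
        intro r _
        have h1 : (ℓ r : ℝ) ≤ n := by exact_mod_cast hℓ r
        have h2 : (0:ℝ) ≤ (ℓ' r : ℝ) := Nat.cast_nonneg _
        nlinarith [pow_pos hx0 r]
      have hsum1 : ∑ r ∈ Finset.Ico (rs+1) (R+1), -((n:ℝ) * x ^ r)
          ≤ ∑ r ∈ Finset.Ico (rs+1) (R+1), ((ℓ' r : ℝ) - ℓ r) * x ^ r :=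
        Finset.sum_le_sum hb
      have hgeom : ∑ r ∈ Finset.Ico (rs+1) (R+1), (n:ℝ) * x ^ r < x ^ rs := by
        rw [← Finset.mul_sum]
        rcases le_or_gt (R+1) (rs+1) with hle | hlt2
        · have : Finset.Ico (rs+1) (R+1) = ∅ := Finset.Ico_eq_empty (by omega)
          rw [this, Finset.sum_empty, mul_zero]
          exact pow_pos hx0 rs
        · rw [geom_sum_Ico hxne1 (le_of_lt hlt2)]
          have hxR : 0 < x ^ (R+1) := pow_pos hx0 _
          have hxrs : (0:ℝ) < x ^ rs := pow_pos hx0 rs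
          have h1x : 0 < 1 - x := by linarith
          have heqd : (x ^ (R+1) - x ^ (rs+1)) / (x - 1)
              = (x ^ (rs+1) - x ^ (R+1)) / (1 - x) := by
            rw [div_eq_div_iff (by linarith) (by linarith)]; ring
          rw [heqd, mul_div_assoc', div_lt_iff₀ h1x]
          have hnx : (n:ℝ) * x = 1/2 := by
            rw [hxdef]; field_simp
          have hxhalf : x ≤ 1/2 := by
            have h2 : (2:ℝ) ≤ 2*n := by linarith
            calc x = (2*(n:ℝ))⁻¹ := hxdef
              _ ≤ (2:ℝ)⁻¹ := by
                  apply inv_anti₀ (by norm_num) h2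
              _ = 1/2 := by norm_num
          have hxp : x ^ (rs+1) = x ^ rs * x := pow_succ x rs
          have hnpos : (0:ℝ) < n := by linarith
          nlinarith [mul_pos hnpos hxR]
      calc -(x ^ rs) < -(∑ r ∈ Finset.Ico (rs+1) (R+1), (n:ℝ) * x ^ r) := by linarith
        _ = ∑ r ∈ Finset.Ico (rs+1) (R+1), -((n:ℝ) * x ^ r) := by
            rw [Finset.sum_neg_distrib]
        _ ≤ _ := hsum1
    have : 0 < W' - W := by
      rw [hsub, ← hsplit1, hzero, zero_add, ← hsplit2, hsingle]
      linarith
    linarith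
  set δ : ℝ := W' - W with hδdef
  have hδ : 0 < δ := by simp [hδdef]; linarith
  -- bound g m / f m ≤ exp (2C) * m ^ (-δ) for m ≥ 2
  have hbound : ∀ m : ℕ, 2 ≤ m → g m / f m ≤ Real.exp (2 * C) * (m:ℝ) ^ (-δ) := by
    intro m hm
    have hm1 : (1:ℝ) < (m:ℝ) := by exact_mod_cast (by omega : 1 < m)
    have hlogm : 0 ≤ Real.log m := Real.log_nonneg (by linarith)
    have hfb' := hfb m hm
    have hgb' := hgb m hm
    simp only [hzpow] at hfb' hgb'
    rw [abs_le] at hfb' hgb'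
    have hlogg : Real.log (g m) ≤ -W' * Real.log m + C := by
      rw [← hW'] at hgb'; linarith [hgb'.2]
    have hlogf : -W * Real.log m - C ≤ Real.log (f m) := by
      rw [← hW] at hfb'; linarith [hfb'.1]
    have hratio : Real.log (g m / f m) ≤ 2 * C - δ * Real.log m := by
      rw [Real.log_div (ne_of_gt (hg m)) (ne_of_gt (hf m))]
      rw [hδdef]; nlinarith
    have hpos : 0 < g m / f m := div_pos (hg m) (hf m)
    calc g m / f m = Real.exp (Real.log (g m / f m)) := (Real.exp_log hpos).symm
      _ ≤ Real.exp (2 * C - δ * Real.log m) := Real.exp_le_exp.mpr hratio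
      _ = Real.exp (2 * C) * (m:ℝ) ^ (-δ) := by
          rw [Real.rpow_def_of_pos (by linarith : (0:ℝ) < (m:ℝ)), ← Real.exp_add]
          ring_nf
  -- conclude by squeeze
  have htend : Filter.Tendsto (fun m : ℕ => Real.exp (2 * C) * (m:ℝ) ^ (-δ))
      Filter.atTop (nhds 0) := by
    have h1 : Filter.Tendsto (fun m : ℕ => ((m:ℝ)) ^ (-δ)) Filter.atTop (nhds 0) :=
      (tendsto_rpow_neg_atTop hδ).comp tendsto_natCast_atTop_atTop
    simpa using h1.const_mul (Real.exp (2 * C))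
  apply squeeze_zero' (t₀ := Filter.atTop)
  · filter_upwards with m
    exact le_of_lt (div_pos (hg m) (hf m))
  · filter_upwards [Filter.eventually_ge_atTop 2] with m hm
    exact hbound m hm
  · exact htend
end

section
/- Let F be a finite field, let k be a natural number, and let x_1, …, x_k ∈ F be k pairwise distinct nonzero elements. For each y ∈ F, let P_y denote the uniform probability distribution on the (finite, nonempty) set of polynomials p ∈ F[X] with degree at most k and p(0) = y. Then for every y ∈ F, the pushforward of P_y under the evaluation map p ↦ (p(x_1), …, p(x_k)) is the uniform distribution on F^k; in particular, this pushforward distribution is the same for all secrets y ∈ F. -/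
/-- Distributional secrecy of Shamir secret sharing: for any secret `y`, if a
polynomial of degree at most `k` with constant term `y` is chosen uniformly at
random, then its vector of evaluations at `k` pairwise distinct nonzero points
is uniformly distributed on `F^k`; in particular, this distribution is the same
for every secret `y`. -/
theorem shamir_shares_uniform
    (F : Type*) [Field F] [Fintype F] [DecidableEq F] (k : ℕ) (x : Fin k → F)
    (hinj : Function.Injective x) (hx : ∀ i, x i ≠ 0)
    (s : F → Finset (Polynomial F))
    (hs : ∀ y p, p ∈ s y ↔ p.degree ≤ (k : WithBot ℕ) ∧ p.eval 0 = y)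
    (hne : ∀ y, (s y).Nonempty) :
    ∀ y : F,
      (PMF.uniformOfFinset (s y) (hne y)).map
          (fun p => (fun i => p.eval (x i) : Fin k → F)) =
        PMF.uniformOfFintype (Fin k → F) := by
  intro y
  classical
  set v : Option (Fin k) → F := fun o => o.elim 0 x with hv
  have hvinj : Set.InjOn v (Finset.univ : Finset (Option (Fin k))) := by
    intro a _ b _ hab
    match a, b with
    | none, none => rfl
    | none, some j => exact absurd hab.symm (hx j)
    | some i, none => exact absurd hab (hx i)
    | some i, some j => exact congrArg some (hinj hab)
  have hcard : (Finset.univ : Finset (Option (Fin k))).card = k + 1 := by simp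
  have hlt : ∀ d : WithBot ℕ, d < ((k + 1 : ℕ) : WithBot ℕ) → d ≤ (k : WithBot ℕ) := by
    intro d hd
    cases d with
    | bot => exact bot_le
    | coe n =>
      simp only [Nat.cast_withBot] at hd ⊢
      exact WithBot.coe_le_coe.mpr (Nat.lt_succ_iff.mp (WithBot.coe_lt_coe.mp hd))
  have key : ∀ a : Fin k → F, ∃! p, p ∈ s y ∧ (fun i => p.eval (x i)) = a := by
    intro a
    set r : Option (Fin k) → F := fun o => o.elim y a with hr
    refine ⟨Lagrange.interpolate Finset.univ v r, ⟨?_, ?_⟩, ?_⟩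
    · rw [hs]
      constructor
      · apply hlt
        have := Lagrange.degree_interpolate_lt r hvinj
        rwa [hcard] at this
      · have := Lagrange.eval_interpolate_at_node r hvinj
          (Finset.mem_univ (none : Option (Fin k)))
        simpa [hv, hr] using this
    · funext i
      have := Lagrange.eval_interpolate_at_node r hvinj
        (Finset.mem_univ (some i : Option (Fin k)))
      simpa [hv, hr] using this
    · rintro q ⟨hq, hqa⟩
      apply Lagrange.eq_interpolate_of_eval_eq r hvinj
      · rw [hcard]
        exact lt_of_le_of_lt ((hs y q).mp hq).1
          (by exact_mod_cast Nat.lt_succ_self k)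
      · rintro (_ | i) _
        · simpa [hv, hr] using ((hs y q).mp hq).2
        · simpa [hv, hr] using congrFun hqa i
  have hcards : (s y).card = Fintype.card (Fin k → F) := by
    rw [← Finset.card_univ]
    apply Finset.card_bij (fun p _ => (fun i => p.eval (x i) : Fin k → F))
    · intro p _; exact Finset.mem_univ _
    · intro p hp q hq hpq
      obtain ⟨w, _, huniq⟩ := key (fun i => p.eval (x i))
      rw [huniq p ⟨hp, rfl⟩, huniq q ⟨hq, hpq.symm⟩]
    · intro a _
      obtain ⟨p, ⟨hp, hpa⟩, _⟩ := key a
      exact ⟨p, hp, hpa⟩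
  ext a
  obtain ⟨p, ⟨hp, hpa⟩, huniq⟩ := key a
  rw [PMF.map_apply, PMF.uniformOfFintype_apply]
  rw [tsum_eq_single p ?_]
  · rw [if_pos hpa.symm, PMF.uniformOfFinset_apply, if_pos hp, hcards]
  · intro q hq
    by_cases hqa : a = (fun i => q.eval (x i))
    · rw [if_pos hqa, PMF.uniformOfFinset_apply]
      rw [if_neg]
      intro hqs
      exact hq (huniq q ⟨hqs, hqa.symm⟩)
    · rw [if_neg hqa]
end
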